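/- If ψ : G → ℝ is a negative definite function, then for every t > 0 the function g ↦ e^{-tψ(g)} is positive definite (Schoenberg); in particular, for 0 < r < 1 the function g ↦ r^{ψ(g)} is positive definite. -/

import Mathlib

open scoped ComplexConjugate

/-- `φ : G → ℂ` is positive definite: for all `g₁,…,g_n` and `c₁,…,c_n`, the sum
`Σ_{i,j} c_i conj(c_j) φ(g_j⁻¹ g_i)` is a nonnegative real number. -/
def IsPosDef {G : Type*} [Group G] (φ : G → ℂ) : Prop :=
  ∀ (n : ℕ) (g : Fin n → G) (c : Fin n → ℂ),
    0 ≤ (∑ i, ∑ j, c i * conj (c j) * φ ((g j)⁻¹ * g i)).re ∧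
      (∑ i, ∑ j, c i * conj (c j) * φ ((g j)⁻¹ * g i)).im = 0

/-- `ψ : G → ℝ` is negative definite: `ψ(g⁻¹) = ψ(g)` and, whenever `Σ c_i = 0`,
the sum `Σ_{i,j} c_i conj(c_j) ψ(g_j⁻¹ g_i)` is a nonpositive real number. -/
def IsNegDef {G : Type*} [Group G] (ψ : G → ℝ) : Prop :=
  (∀ g : G, ψ g⁻¹ = ψ g) ∧
    ∀ (n : ℕ) (g : Fin n → G) (c : Fin n → ℂ), (∑ i, c i) = 0 →
      (∑ i, ∑ j, c i * conj (c j) * (ψ ((g j)⁻¹ * g i) : ℂ)).re ≤ 0 ∧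
        (∑ i, ∑ j, c i * conj (c j) * (ψ ((g j)⁻¹ * g i) : ℂ)).im = 0

open scoped ComplexOrder
open Matrix

private lemma schoenberg_mul_conj_self_nonneg (z : ℂ) : 0 ≤ z * conj z := by
  rw [Complex.mul_conj]
  exact Complex.zero_le_real.mpr (Complex.normSq_nonneg z)

/-- The quadratic form of a "factored" kernel is nonnegative. -/
private lemma schoenberg_qf_factored {n : ℕ} {κ : Type*} [Fintype κ] (B : κ → Fin n → ℂ)
    (d : Fin n → ℂ) :
    0 ≤ ∑ i, ∑ j, d i * conj (d j) * (∑ k, conj (B k i) * B k j) := by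
  have h1 : ∀ k : κ, (∑ i, d i * conj (B k i)) * conj (∑ i, d i * conj (B k i))
      = ∑ i, ∑ j, d i * conj (d j) * (conj (B k i) * B k j) := by
    intro k
    rw [map_sum, Finset.sum_mul_sum]
    refine Finset.sum_congr rfl fun i _ => Finset.sum_congr rfl fun j _ => ?_
    simp only [_root_.map_mul, Complex.conj_conj]
    ring
  have key : ∑ i, ∑ j, d i * conj (d j) * (∑ k, conj (B k i) * B k j)
      = ∑ k, (∑ i, d i * conj (B k i)) * conj (∑ i, d i * conj (B k i)) := by
    calc ∑ i, ∑ j, d i * conj (d j) * (∑ k, conj (B k i) * B k j)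
        = ∑ i, ∑ j, ∑ k, d i * conj (d j) * (conj (B k i) * B k j) :=
          Finset.sum_congr rfl fun i _ => Finset.sum_congr rfl fun j _ =>
            Finset.mul_sum _ _ _
      _ = ∑ i, ∑ k, ∑ j, d i * conj (d j) * (conj (B k i) * B k j) :=
          Finset.sum_congr rfl fun i _ => Finset.sum_comm
      _ = ∑ k, ∑ i, ∑ j, d i * conj (d j) * (conj (B k i) * B k j) := Finset.sum_comm
      _ = ∑ k, (∑ i, d i * conj (B k i)) * conj (∑ i, d i * conj (B k i)) :=
          Finset.sum_congr rfl fun k _ => (h1 k).symm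
  rw [key]
  exact Finset.sum_nonneg fun k _ => schoenberg_mul_conj_self_nonneg _

/-- Entrywise (Hadamard) powers of a positive semidefinite matrix have nonnegative
quadratic forms. -/
private lemma schoenberg_qf_psd_pow {n : ℕ} {A : Matrix (Fin n) (Fin n) ℂ}
    (hA : A.PosSemidef) (m : ℕ) (d : Fin n → ℂ) :
    0 ≤ ∑ i, ∑ j, d i * conj (d j) * A i j ^ m := by
  obtain ⟨B, hB⟩ : ∃ B : Matrix (Fin n) (Fin n) ℂ, A = Bᴴ * B := by
    open scoped MatrixOrder in
    exact CStarAlgebra.nonneg_iff_eq_star_mul_self.mp hA.nonneg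
  have hpow : ∀ i j, A i j ^ m
      = ∑ p : Fin m → Fin n, conj (∏ t, B (p t) i) * (∏ t, B (p t) j) := by
    intro i j
    have hentry : A i j = ∑ k, conj (B k i) * B k j := by
      rw [hB]; simp [Matrix.mul_apply, Matrix.conjTranspose_apply]
    rw [hentry, Fintype.sum_pow]
    refine Finset.sum_congr rfl fun p _ => ?_
    rw [Finset.prod_mul_distrib, map_prod]
  simp only [hpow]
  have := schoenberg_qf_factored (κ := Fin m → Fin n) (fun p i => ∏ t, B (p t) i) d
  exact this

/-- The kernel `ψ(gᵢ) + ψ(gⱼ) - ψ(gⱼ⁻¹gᵢ) - ψ(1)` associated to a negative definite `ψ`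
has nonnegative quadratic forms. -/
private lemma schoenberg_qf_Nmat {G : Type*} [Group G] {ψ : G → ℝ} (hψ : IsNegDef ψ) {n : ℕ}
    (g : Fin n → G) (c : Fin n → ℂ) :
    0 ≤ ∑ i, ∑ j, c i * conj (c j) *
      ((ψ (g i) + ψ (g j) - ψ ((g j)⁻¹ * g i) - ψ 1 : ℝ) : ℂ) := by
  have hA : ∀ z : ℂ, (∑ i, c i) * conj (∑ i, c i) * z
      = ∑ i, ∑ j, c i * conj (c j) * z := by
    intro z
    rw [map_sum, Finset.sum_mul_sum, Finset.sum_mul]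
    exact Finset.sum_congr rfl fun i _ => by rw [Finset.sum_mul]
  have hB : ∀ w : Fin n → ℂ, (∑ j, (∑ i, c i) * conj (c j) * w j)
      = ∑ i, ∑ j, c i * conj (c j) * w j := by
    intro w
    calc ∑ j, (∑ i, c i) * conj (c j) * w j
        = ∑ j, ∑ i, c i * conj (c j) * w j :=
          Finset.sum_congr rfl fun j _ => by rw [Finset.sum_mul, Finset.sum_mul]
      _ = ∑ i, ∑ j, c i * conj (c j) * w j := Finset.sum_comm
  have hC : ∀ w : Fin n → ℂ, (∑ i, c i * conj (∑ j, c j) * w i)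
      = ∑ i, ∑ j, c i * conj (c j) * w i := by
    intro w
    refine Finset.sum_congr rfl fun i _ => ?_
    rw [map_sum, Finset.mul_sum, Finset.sum_mul]
  set c' : Fin (n + 1) → ℂ := Fin.cons (-(∑ i, c i)) c with hc'
  set g' : Fin (n + 1) → G := Fin.cons 1 g with hg'
  have hsum : ∑ i, c' i = 0 := by rw [hc', Fin.sum_cons]; simp
  obtain ⟨hre, him⟩ := hψ.2 (n + 1) g' c' hsum
  have hT : (∑ i, ∑ j, c' i * conj (c' j) * (ψ ((g' j)⁻¹ * g' i) : ℂ)) ≤ 0 := by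
    rw [Complex.le_def]
    exact ⟨by simpa using hre, by simpa using him⟩
  have expand : ∑ i, ∑ j, c' i * conj (c' j) * (ψ ((g' j)⁻¹ * g' i) : ℂ)
      = (-(∑ i, c i)) * conj (-(∑ i, c i)) * (ψ ((1 : G)⁻¹ * 1) : ℂ)
        + (∑ j, (-(∑ i, c i)) * conj (c j) * (ψ ((g j)⁻¹ * 1) : ℂ))
        + ((∑ i, c i * conj (-(∑ j, c j)) * (ψ ((1 : G)⁻¹ * g i) : ℂ))
        + ∑ i, ∑ j, c i * conj (c j) * (ψ ((g j)⁻¹ * g i) : ℂ)) := by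
    rw [Fin.sum_univ_succ]
    congr 1
    · rw [Fin.sum_univ_succ]
      simp [hc', hg']
    · rw [← Finset.sum_add_distrib]
      refine Finset.sum_congr rfl fun i _ => ?_
      rw [Fin.sum_univ_succ]
      simp [hc', hg']
  have e1 : (-(∑ i, c i)) * conj (-(∑ i, c i)) * (ψ ((1 : G)⁻¹ * 1) : ℂ)
      = ∑ i, ∑ j, c i * conj (c j) * (ψ (1 : G) : ℂ) := by
    rw [inv_one, one_mul, map_neg, neg_mul_neg]
    exact hA _
  have e2 : (∑ j, (-(∑ i, c i)) * conj (c j) * (ψ ((g j)⁻¹ * 1) : ℂ))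
      = -∑ i, ∑ j, c i * conj (c j) * (ψ (g j) : ℂ) := by
    calc ∑ j, (-(∑ i, c i)) * conj (c j) * (ψ ((g j)⁻¹ * 1) : ℂ)
        = ∑ j, -((∑ i, c i) * conj (c j) * (ψ (g j) : ℂ)) :=
          Finset.sum_congr rfl fun j _ => by rw [mul_one, hψ.1]; ring
      _ = -∑ j, (∑ i, c i) * conj (c j) * (ψ (g j) : ℂ) := by
          rw [Finset.sum_neg_distrib]
      _ = -∑ i, ∑ j, c i * conj (c j) * (ψ (g j) : ℂ) := by rw [hB]
  have e3 : (∑ i, c i * conj (-(∑ j, c j)) * (ψ ((1 : G)⁻¹ * g i) : ℂ))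
      = -∑ i, ∑ j, c i * conj (c j) * (ψ (g i) : ℂ) := by
    calc ∑ i, c i * conj (-(∑ j, c j)) * (ψ ((1 : G)⁻¹ * g i) : ℂ)
        = ∑ i, -(c i * conj (∑ j, c j) * (ψ (g i) : ℂ)) :=
          Finset.sum_congr rfl fun i _ => by rw [inv_one, one_mul, map_neg]; ring
      _ = -∑ i, c i * conj (∑ j, c j) * (ψ (g i) : ℂ) := by rw [Finset.sum_neg_distrib]
      _ = -∑ i, ∑ j, c i * conj (c j) * (ψ (g i) : ℂ) := by rw [hC]
  rw [expand, e1, e2, e3] at hT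
  have key : (∑ i, ∑ j, c i * conj (c j) *
        ((ψ (g i) + ψ (g j) - ψ ((g j)⁻¹ * g i) - ψ 1 : ℝ) : ℂ))
      = -((∑ i, ∑ j, c i * conj (c j) * (ψ (1 : G) : ℂ))
          + -(∑ i, ∑ j, c i * conj (c j) * (ψ (g j) : ℂ))
          + (-(∑ i, ∑ j, c i * conj (c j) * (ψ (g i) : ℂ))
            + ∑ i, ∑ j, c i * conj (c j) * (ψ ((g j)⁻¹ * g i) : ℂ))) := by
    have split : ∀ i j : Fin n, c i * conj (c j) *
          ((ψ (g i) + ψ (g j) - ψ ((g j)⁻¹ * g i) - ψ 1 : ℝ) : ℂ)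
        = c i * conj (c j) * (ψ (g i) : ℂ) + c i * conj (c j) * (ψ (g j) : ℂ)
          - c i * conj (c j) * (ψ (1 : G) : ℂ)
          - c i * conj (c j) * (ψ ((g j)⁻¹ * g i) : ℂ) := by
      intro i j; push_cast; ring
    simp only [split, Finset.sum_add_distrib, Finset.sum_sub_distrib]
    ring
  rw [key]
  exact neg_nonneg.mpr hT

/-- The heart of Schoenberg's theorem: the quadratic form of the kernel
`exp(-t ψ(gⱼ⁻¹gᵢ))` is nonnegative. -/
private lemma schoenberg_qf_exp {G : Type*} [Group G] {ψ : G → ℝ} (hψ : IsNegDef ψ) {n : ℕ}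
    (g : Fin n → G) (c : Fin n → ℂ) {t : ℝ} (ht : 0 ≤ t) :
    0 ≤ ∑ i, ∑ j, c i * conj (c j) *
      Complex.exp (-((t : ℂ) * (ψ ((g j)⁻¹ * g i) : ℂ))) := by
  classical
  set N : Matrix (Fin n) (Fin n) ℂ :=
    Matrix.of fun i j => ((ψ (g i) + ψ (g j) - ψ ((g j)⁻¹ * g i) - ψ 1 : ℝ) : ℂ) with hN
  have hsymm : ∀ a b : G, ψ (a⁻¹ * b) = ψ (b⁻¹ * a) := by
    intro a b
    rw [← hψ.1 (a⁻¹ * b), _root_.mul_inv_rev, inv_inv]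
  have hpsd : N.PosSemidef := by
    rw [Matrix.posSemidef_iff_dotProduct_mulVec]
    constructor
    · ext i j
      simp only [hN, Matrix.conjTranspose_apply, Matrix.of_apply, Complex.star_def,
        Complex.conj_ofReal]
      exact Complex.ofReal_inj.mpr (by rw [hsymm (g i) (g j)]; ring)
    · intro x
      have hx : star x ⬝ᵥ N *ᵥ x
          = ∑ i, ∑ j, (fun i => conj (x i)) i * conj ((fun i => conj (x i)) j) * N i j := by
        simp only [dotProduct, Matrix.mulVec, Pi.star_apply, Finset.mul_sum]
        refine Finset.sum_congr rfl fun i _ => Finset.sum_congr rfl fun j _ => ?_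
        simp only [Complex.star_def, Complex.conj_conj]
        ring
      rw [hx]
      exact schoenberg_qf_Nmat hψ g (fun i => conj (x i))
  set d : Fin n → ℂ := fun i => c i * ((Real.exp (-(t * ψ (g i))) : ℝ) : ℂ) with hd
  have hexp : ∀ z : ℂ, Complex.exp z = ∑' m : ℕ, z ^ m / (Nat.factorial m) := fun z => by
    rw [Complex.exp_eq_exp_ℂ, NormedSpace.exp_eq_tsum_div]
  have hpt : ∀ i j, c i * conj (c j) * Complex.exp (-((t : ℂ) * (ψ ((g j)⁻¹ * g i) : ℂ)))
      = (d i * conj (d j) * Complex.exp ((t : ℂ) * N i j))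
          * ((Real.exp (t * ψ 1) : ℝ) : ℂ) := by
    intro i j
    have harg : (-((t : ℂ) * (ψ ((g j)⁻¹ * g i) : ℂ)))
        = (t : ℂ) * N i j + (((-(t * ψ (g i)) : ℝ) : ℂ) + ((-(t * ψ (g j)) : ℝ) : ℂ)
            + ((t * ψ 1 : ℝ) : ℂ)) := by
      simp only [hN, Matrix.of_apply]
      push_cast
      ring
    rw [harg, Complex.exp_add, Complex.exp_add, Complex.exp_add, ← Complex.ofReal_exp,
      ← Complex.ofReal_exp, ← Complex.ofReal_exp, hd]
    simp only [_root_.map_mul, Complex.conj_ofReal]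
    ring
  have hstep : ∑ i, ∑ j, c i * conj (c j) *
        Complex.exp (-((t : ℂ) * (ψ ((g j)⁻¹ * g i) : ℂ)))
      = (∑ i, ∑ j, d i * conj (d j) * Complex.exp ((t : ℂ) * N i j))
          * ((Real.exp (t * ψ 1) : ℝ) : ℂ) := by
    rw [Finset.sum_mul]
    refine Finset.sum_congr rfl fun i _ => ?_
    rw [Finset.sum_mul]
    exact Finset.sum_congr rfl fun j _ => hpt i j
  rw [hstep]
  refine mul_nonneg ?_ (Complex.zero_le_real.mpr (Real.exp_nonneg _))
  -- expand the exponential as a series and use Schur products termwise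
  have hsummand : ∀ i j, Summable fun m : ℕ =>
      d i * conj (d j) * (((t : ℂ) * N i j) ^ m / (Nat.factorial m)) :=
    fun i j => (NormedSpace.expSeries_div_summable ((t : ℂ) * N i j)).mul_left _
  have hswap : ∑ i, ∑ j, d i * conj (d j) * Complex.exp ((t : ℂ) * N i j)
      = ∑' m : ℕ, ∑ i, ∑ j, d i * conj (d j)
          * (((t : ℂ) * N i j) ^ m / (Nat.factorial m)) := by
    calc ∑ i, ∑ j, d i * conj (d j) * Complex.exp ((t : ℂ) * N i j)
        = ∑ i, ∑ j, ∑' m : ℕ, d i * conj (d j)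
            * (((t : ℂ) * N i j) ^ m / (Nat.factorial m)) := by
          refine Finset.sum_congr rfl fun i _ => Finset.sum_congr rfl fun j _ => ?_
          rw [hexp, ← tsum_mul_left]
      _ = ∑ i, ∑' m : ℕ, ∑ j, d i * conj (d j)
            * (((t : ℂ) * N i j) ^ m / (Nat.factorial m)) :=
          Finset.sum_congr rfl fun i _ => (Summable.tsum_finsetSum fun j _ => hsummand i j).symm
      _ = ∑' m : ℕ, ∑ i, ∑ j, d i * conj (d j)
            * (((t : ℂ) * N i j) ^ m / (Nat.factorial m)) :=
          (Summable.tsum_finsetSum fun i _ => summable_sum fun j _ => hsummand i j).symm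
  rw [hswap]
  refine tsum_nonneg fun m => ?_
  have hm : ∑ i, ∑ j, d i * conj (d j) * (((t : ℂ) * N i j) ^ m / (Nat.factorial m))
      = ((t ^ m / (Nat.factorial m) : ℝ) : ℂ) * ∑ i, ∑ j, d i * conj (d j) * N i j ^ m := by
    rw [Finset.mul_sum]
    refine Finset.sum_congr rfl fun i _ => ?_
    rw [Finset.mul_sum]
    refine Finset.sum_congr rfl fun j _ => ?_
    push_cast
    ring
  rw [hm]
  refine mul_nonneg (Complex.zero_le_real.mpr (by positivity)) ?_
  exact schoenberg_qf_psd_pow hpsd m d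

/-- Schoenberg's theorem: if `ψ` is negative definite then `e^{-tψ}` is positive
definite for all `t > 0`; in particular `r^ψ` is positive definite for `0 < r < 1`. -/
theorem schoenberg {G : Type*} [Group G] (ψ : G → ℝ) (hψ : IsNegDef ψ) :
    (∀ t : ℝ, 0 < t → IsPosDef fun g : G => Complex.exp (-(t * ψ g))) ∧
      (∀ r : ℝ, 0 < r → r < 1 → IsPosDef fun g : G => ((r ^ ψ g : ℝ) : ℂ)) := by
  constructor
  · intro t ht n g c
    have h := schoenberg_qf_exp hψ g c ht.le
    have h' := Complex.nonneg_iff.mp h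
    exact ⟨h'.1, h'.2.symm⟩
  · intro r hr hr1 n g c
    have ht : (0 : ℝ) ≤ -Real.log r := by
      have := Real.log_neg hr hr1
      linarith
    have heq : ∑ i, ∑ j, c i * conj (c j) * ((r ^ ψ ((g j)⁻¹ * g i) : ℝ) : ℂ)
        = ∑ i, ∑ j, c i * conj (c j) *
            Complex.exp (-(((-Real.log r : ℝ) : ℂ) * (ψ ((g j)⁻¹ * g i) : ℂ))) := by
      refine Finset.sum_congr rfl fun i _ => Finset.sum_congr rfl fun j _ => ?_
      congr 1
      rw [Real.rpow_def_of_pos hr, Complex.ofReal_exp]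
      congr 1
      push_cast
      ring
    have h := schoenberg_qf_exp hψ g c ht
    rw [← heq] at h
    have h' := Complex.nonneg_iff.mp h
    exact ⟨h'.1, h'.2.symm⟩
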